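/- arXiv:2002.03376 — 2 statements merged into one kernel-verified Lean document; each statement's English description precedes it below -/
import Mathlib

section
/- Let F : [0,∞) → [0,∞) be continuous on [0,∞), C¹ on (0,∞), F(0)=0, x ↦ xF(x) strictly convex, and suppose x ↦ x²F'(x) is strictly increasing with limit ∞ as x → ∞. Let G : [0,∞) → [0,∞) be the inverse of x ↦ x²F'(x). Then the function x ↦ x/G(x) extends continuously to [0,∞), with value lim_{x→0⁺} x/G(x) = 0 at 0. -/
open Set Filter Topology

/-- Under the standing assumptions on the impact function `F`, with `G` the
inverse of `x ↦ x² F'(x)`, the map `x ↦ x / G x` extends continuously to `[0,∞)` with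
value `0` at `0` (note that in Lean `0 / G 0 = 0`, so the extension is the map itself). -/
theorem stmt8 (F G : ℝ → ℝ)
    (hF_nonneg : ∀ x ∈ Ici (0:ℝ), 0 ≤ F x)
    (hF_cont : ContinuousOn F (Ici 0))
    (hF_diff : ∀ x ∈ Ioi (0:ℝ), DifferentiableAt ℝ F x)
    (hF_derivCont : ContinuousOn (deriv F) (Ioi 0))
    (hF0 : F 0 = 0)
    (hconv : StrictConvexOn ℝ (Ici 0) (fun x => x * F x))
    (hmono : StrictMonoOn (fun x => x ^ 2 * deriv F x) (Ici 0))
    (htop : Tendsto (fun x => x ^ 2 * deriv F x) atTop atTop)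
    (hG_nonneg : ∀ x ∈ Ici (0:ℝ), 0 ≤ G x)
    (hG_left : ∀ x ∈ Ici (0:ℝ), G (x ^ 2 * deriv F x) = x)
    (hG_right : ∀ y ∈ Ici (0:ℝ), (G y) ^ 2 * deriv F (G y) = y) :
    Tendsto (fun x => x / G x) (𝓝[>] 0) (𝓝 0) ∧
    ContinuousOn (fun x => x / G x) (Ici 0) := by
  have hcv : ConvexOn ℝ (Ici 0) (fun x => x * F x) := hconv.convexOn
  -- the derivative of x * F x at positive points
  have hd : ∀ x ∈ Ioi (0:ℝ), HasDerivAt (fun y => y * F y) (F x + x * deriv F x) x := by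
    intro x hx
    have := (hasDerivAt_id' x).fun_mul ((hF_diff x hx).hasDerivAt)
    simpa using this
  -- lower bound : 0 ≤ x * deriv F x for x > 0
  have hlow : ∀ x ∈ Ioi (0:ℝ), 0 ≤ x * deriv F x := by
    intro x hx
    have hx0 : (0:ℝ) < x := hx
    have h1 := hcv.slope_le_of_hasDerivAt self_mem_Ici (le_of_lt hx0) hx0 (hd x hx)
    rw [slope_def_field] at h1
    have hs : (x * F x - 0 * F 0) / (x - 0) = F x := by
      rw [div_eq_iff (by linarith : x - 0 ≠ 0)]; ring
    rw [hs] at h1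
    linarith
  -- upper bound : x * deriv F x ≤ 2 * F (2*x) for x > 0
  have hupp : ∀ x ∈ Ioi (0:ℝ), x * deriv F x ≤ 2 * F (2 * x) := by
    intro x hx
    have hx0 : (0:ℝ) < x := hx
    have h2x : (2:ℝ) * x ∈ Ici (0:ℝ) := mem_Ici.mpr (by linarith)
    have h2 := hcv.le_slope_of_hasDerivAt (le_of_lt hx0) h2x (by linarith) (hd x hx)
    rw [slope_def_field] at h2
    have hs : (2 * x * F (2 * x) - x * F x) / (2 * x - x) = 2 * F (2 * x) - F x := by
      rw [div_eq_iff (by linarith : 2 * x - x ≠ 0)]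
      ring
    rw [hs] at h2
    have hFx : 0 ≤ F x := hF_nonneg x (le_of_lt hx0)
    linarith
  -- the key limit: x * deriv F x → 0 as x → 0⁺
  have key : Tendsto (fun x => x * deriv F x) (𝓝[>] (0:ℝ)) (𝓝 0) := by
    have h2x : Tendsto (fun x : ℝ => 2 * x) (𝓝[>] (0:ℝ)) (𝓝[Ici 0] 0) := by
      apply tendsto_nhdsWithin_of_tendsto_nhds_of_eventually_within
      · have : Tendsto (fun x : ℝ => 2 * x) (𝓝 (0:ℝ)) (𝓝 (2 * 0)) :=
          (continuous_const.mul continuous_id).tendsto 0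
        simpa using this.mono_left nhdsWithin_le_nhds
      · filter_upwards [self_mem_nhdsWithin] with x hx
        have : (0:ℝ) < x := hx
        simp only [mem_Ici]; linarith
    have hF0t : Tendsto F (𝓝[Ici 0] (0:ℝ)) (𝓝 0) := by
      have := hF_cont 0 self_mem_Ici
      rwa [ContinuousWithinAt, hF0] at this
    have hup : Tendsto (fun x : ℝ => 2 * F (2 * x)) (𝓝[>] (0:ℝ)) (𝓝 0) := by
      have := (hF0t.comp h2x).const_mul (2:ℝ)
      simpa using this
    refine tendsto_of_tendsto_of_tendsto_of_le_of_le' (g := fun _ => (0:ℝ))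
      tendsto_const_nhds hup ?_ ?_
    · filter_upwards [self_mem_nhdsWithin] with x hx using hlow x hx
    · filter_upwards [self_mem_nhdsWithin] with x hx using hupp x hx
  -- basic facts about G
  have hH0 : (fun x => x ^ 2 * deriv F x) 0 = 0 := by simp
  have hG0 : G 0 = 0 := by
    have := hG_left 0 self_mem_Ici
    simpa using this
  have hGpos : ∀ y ∈ Ioi (0:ℝ), 0 < G y := by
    intro y hy
    have hy0 : (0:ℝ) < y := hy
    rcases lt_or_eq_of_le (hG_nonneg y (le_of_lt hy0)) with h | h
    · exact h
    · exfalso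
      have := hG_right y (le_of_lt hy0)
      rw [← h] at this
      simp at this
      linarith
  -- G is strictly monotone on Ici 0
  have hGmono : StrictMonoOn G (Ici 0) := by
    intro y1 h1 y2 h2 h
    have := (hmono.lt_iff_lt (hG_nonneg y1 h1) (hG_nonneg y2 h2)).mp
    apply this
    rw [hG_right y1 h1, hG_right y2 h2]
    exact h
  -- H = fun x => x^2 * deriv F x is nonnegative on Ici 0
  have hH_nonneg : ∀ u ∈ Ici (0:ℝ), 0 ≤ u ^ 2 * deriv F u := by
    intro u hu
    rcases eq_or_lt_of_le (mem_Ici.mp hu) with h | h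
    · simp [← h]
    · have := hmono self_mem_Ici hu h
      simpa using this.le
  -- G is continuous at every positive point
  have hGcont : ∀ x ∈ Ioi (0:ℝ), ContinuousAt G x := by
    intro x hx
    have hx0 : (0:ℝ) < x := hx
    apply hGmono.continuousAt_of_image_mem_nhds (Ici_mem_nhds hx0)
    have hsub : Ici (0:ℝ) ⊆ G '' Ici 0 := by
      intro u hu
      exact ⟨u ^ 2 * deriv F u, hH_nonneg u hu, hG_left u hu⟩
    exact mem_of_superset (Ici_mem_nhds (hGpos x hx)) hsub
  -- G tends to 0 within Ioi 0 as y → 0⁺, staying in Ioi 0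
  have hGt : Tendsto G (𝓝[>] (0:ℝ)) (𝓝[>] (0:ℝ)) := by
    rw [tendsto_nhdsWithin_iff]
    constructor
    · rw [tendsto_order]
      constructor
      · intro a ha
        filter_upwards [self_mem_nhdsWithin] with y hy
        exact lt_of_lt_of_le ha (hG_nonneg y (mem_Ici.mpr (le_of_lt (show (0:ℝ) < y from hy))))
      · intro b hb
        have hHb : 0 < b ^ 2 * deriv F b := by
          have := hmono self_mem_Ici (le_of_lt hb) hb
          simpa using this
        filter_upwards [Ioo_mem_nhdsGT_of_mem (left_mem_Ico.mpr hHb)] with y hy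
        have hy0 : (0:ℝ) < y := hy.1
        refine (hmono.lt_iff_lt (hG_nonneg y (le_of_lt hy0)) (le_of_lt hb)).mp ?_
        show G y ^ 2 * deriv F (G y) < b ^ 2 * deriv F b
        rw [hG_right y (le_of_lt hy0)]
        exact hy.2
    · filter_upwards [self_mem_nhdsWithin] with y hy using hGpos y hy
  -- statement 1
  have part1 : Tendsto (fun x => x / G x) (𝓝[>] (0:ℝ)) (𝓝 0) := by
    have hcomp : Tendsto (fun x => G x * deriv F (G x)) (𝓝[>] (0:ℝ)) (𝓝 0) :=
      key.comp hGt
    apply hcomp.congr'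
    filter_upwards [self_mem_nhdsWithin] with x hx
    have hx0 : (0:ℝ) < x := hx
    have hGx : (0:ℝ) < G x := hGpos x hx
    have hr := hG_right x (le_of_lt hx0)
    rw [eq_comm, div_eq_iff (ne_of_gt hGx)]
    linear_combination -hr
  refine ⟨part1, ?_⟩
  -- statement 2: continuity on Ici 0
  intro x hx
  rcases eq_or_lt_of_le (mem_Ici.mp hx) with h | h
  · -- x = 0
    subst h
    rw [ContinuousWithinAt, zero_div]
    rw [show Ici (0:ℝ) = insert 0 (Ioi 0) by rw [Ioi_insert], nhdsWithin_insert,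
      tendsto_sup]
    constructor
    · rw [tendsto_pure_left]
      intro s hs
      simpa using mem_of_mem_nhds hs
    · exact part1
  · -- x > 0
    have : ContinuousAt (fun x => x / G x) x :=
      continuousAt_id.div (hGcont x h) (ne_of_gt (hGpos x h))
    exact this.continuousWithinAt
end

section
/- Let F : [0,∞) → [0,∞) be C¹ on (0,∞) with F(0) = 0 and x ↦ xF(x) strictly convex, let G be the inverse of x ↦ x²F'(x), let A > 0 and y ≥ 0 with κ_A(y) ≥ 0. Set x* = G(κ_A(y)/A) and v'(y) = κ_A(y)/G(κ_A(y)/A) + A·F(G(κ_A(y)/A)). Then x* satisfies the first-order condition A·x*·F'(x*) + A·F(x*) − v'(y) = 0, and moreover κ_A(y) + A·x*·F(x*) − x*·v'(y) = 0. Consequently, v solves the Hamilton–Jacobi–Bellman equation κ_A(y) + inf_{x ≥ 0} { A x F(x) − x v'(y) } = 0. -/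
open Set Filter Topology

/-- With `x* = G(κ_A(y)/A)` and
`v'(y) = κ_A(y)/G(κ_A(y)/A) + A·F(G(κ_A(y)/A))`, the first-order condition
`A x* F'(x*) + A F(x*) − v'(y) = 0` holds, as well as
`κ_A(y) + A x* F(x*) − x* v'(y) = 0`; consequently `v` solves the HJB equation
`κ_A(y) + inf_{x ≥ 0} { A x F(x) − x v'(y) } = 0`. -/
theorem stmt10 (F G κA : ℝ → ℝ) (A y : ℝ) (hA : 0 < A) (hy : 0 ≤ y)
    (hF_nonneg : ∀ x ∈ Ici (0:ℝ), 0 ≤ F x)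
    (hF_cont : ContinuousOn F (Ici 0))
    (hF_diff : ∀ x ∈ Ioi (0:ℝ), DifferentiableAt ℝ F x)
    (hF_derivCont : ContinuousOn (deriv F) (Ioi 0))
    (hF0 : F 0 = 0)
    (hconv : StrictConvexOn ℝ (Ici 0) (fun x => x * F x))
    (hmono : StrictMonoOn (fun x => x ^ 2 * deriv F x) (Ici 0))
    (htop : Tendsto (fun x => x ^ 2 * deriv F x) atTop atTop)
    (hG_nonneg : ∀ x ∈ Ici (0:ℝ), 0 ≤ G x)
    (hG_left : ∀ x ∈ Ici (0:ℝ), G (x ^ 2 * deriv F x) = x)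
    (hG_right : ∀ u ∈ Ici (0:ℝ), (G u) ^ 2 * deriv F (G u) = u)
    (hκy : 0 ≤ κA y) :
    (A * G (κA y / A) * deriv F (G (κA y / A)) + A * F (G (κA y / A)) -
        (κA y / G (κA y / A) + A * F (G (κA y / A))) = 0) ∧
    (κA y + A * G (κA y / A) * F (G (κA y / A)) -
        G (κA y / A) * (κA y / G (κA y / A) + A * F (G (κA y / A))) = 0) ∧
    (κA y + sInf ((fun x => A * x * F x -
        x * (κA y / G (κA y / A) + A * F (G (κA y / A)))) '' Ici 0) = 0) := by
  rcases eq_or_lt_of_le hκy with h0 | hκpos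
  · -- κA y = 0
    have h0' : κA y = 0 := h0.symm
    have hG0 : G (κA y / A) = 0 := by
      have := hG_left 0 (mem_Ici.mpr le_rfl)
      simpa [h0'] using this
    have hv : κA y / G (κA y / A) + A * F (G (κA y / A)) = 0 := by
      rw [hG0, h0']; simp [hF0]
    refine ⟨by rw [hG0]; simp [hF0], by rw [hG0, h0']; simp [hF0], ?_⟩
    have himg : (fun x => A * x * F x -
        x * (κA y / G (κA y / A) + A * F (G (κA y / A)))) '' Ici 0
        = (fun x => A * x * F x) '' Ici 0 := by
      apply image_congr
      intro x _
      rw [hv]; ring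
    rw [himg]
    have hleast : IsLeast ((fun x => A * x * F x) '' Ici 0) 0 := by
      constructor
      · exact ⟨0, mem_Ici.mpr le_rfl, by simp [hF0]⟩
      · rintro _ ⟨x, hx, rfl⟩
        have h1 : 0 ≤ F x := hF_nonneg x hx
        have h2 : (0:ℝ) ≤ x := hx
        positivity
    rw [hleast.csInf_eq, h0']
    ring
  · -- κA y > 0
    set g := G (κA y / A) with hg_def
    have hκA : 0 ≤ κA y / A := by positivity
    have hgnn : 0 ≤ g := hG_nonneg _ hκA
    have hgr : g ^ 2 * deriv F g = κA y / A := hG_right _ hκA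
    have hgpos : 0 < g := by
      rcases eq_or_lt_of_le hgnn with h | h
      · exfalso
        rw [← h] at hgr
        have : κA y / A = 0 := by simpa using hgr.symm
        have : κA y = 0 := by
          field_simp at this; linarith
        linarith
      · exact h
    -- key identity: κA y = A * g^2 * deriv F g
    have hκ_eq : κA y = A * (g ^ 2 * deriv F g) := by
      rw [hgr]; field_simp
    have hdivg : κA y / g = A * g * deriv F g := by
      rw [hκ_eq]; field_simp
    have hv' : κA y / g + A * F g = A * g * deriv F g + A * F g := by rw [hdivg]
    refine ⟨by rw [hv']; ring, ?_, ?_⟩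
    · rw [hv']
      have : g * (A * g * deriv F g + A * F g)
          = A * (g ^ 2 * deriv F g) + A * g * F g := by ring
      rw [this, ← hκ_eq]; ring
    · -- HJB: the infimum
      set c : ℝ := F g + g * deriv F g with hc_def
      have hvc : κA y / g + A * F g = A * c := by rw [hv', hc_def]; ring
      have hd : HasDerivAt (fun x => x * F x) c g := by
        have h1 : HasDerivAt (fun x : ℝ => x) 1 g := hasDerivAt_id g
        have h2 : HasDerivAt F (deriv F g) g := (hF_diff g hgpos).hasDerivAt
        have := h1.mul h2
        rw [one_mul] at this; exact this
      have hcvx : ConvexOn ℝ (Ici 0) (fun x => x * F x) := hconv.convexOn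
      -- minimum value at g
      have hmin : ∀ x ∈ Ici (0:ℝ), x * F x - g * F g ≥ c * (x - g) := by
        intro x hx
        rcases lt_trichotomy x g with hlt | heq | hgt
        · have hs := hcvx.slope_le_of_hasDerivAt hx (le_of_lt hgpos |>.trans_eq rfl : g ∈ Ici 0) hlt hd
          rw [slope_def_field] at hs
          have hxg : 0 < g - x := by linarith
          have := (div_le_iff₀ hxg).mp hs
          nlinarith
        · simp [heq]
        · have hs := hcvx.le_slope_of_hasDerivAt (le_of_lt hgpos : g ∈ Ici 0) hx hgt hd
          rw [slope_def_field] at hs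
          have hxg : 0 < x - g := by linarith
          have := (le_div_iff₀ hxg).mp hs
          nlinarith
      have hφg : A * g * F g - g * (κA y / g + A * F g) = -κA y := by
        rw [hvc]
        have : g * (A * c) = A * (g * F g) + A * (g ^ 2 * deriv F g) := by
          rw [hc_def]; ring
        rw [this, ← hκ_eq]; ring
      have hleast : IsLeast ((fun x => A * x * F x -
          x * (κA y / G (κA y / A) + A * F (G (κA y / A)))) '' Ici 0) (-κA y) := by
        constructor
        · exact ⟨g, le_of_lt hgpos, by rw [← hg_def]; simpa using hφg⟩
        · rintro _ ⟨x, hx, rfl⟩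
          rw [← hg_def]
          have h1 := hmin x hx
          have h2 : A * x * F x - x * (κA y / g + A * F g) ≥ -κA y := by
            rw [hvc]
            have : A * x * F x - x * (A * c)
                = A * ((x * F x - g * F g) - c * (x - g)) + (A * g * F g - g * (A * c)) := by
              ring
            rw [this]
            have h3 : A * g * F g - g * (A * c) = -κA y := by rw [← hvc]; exact hφg
            nlinarith
          exact h2
      rw [hleast.csInf_eq]
      ring
end
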